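/- For any α₁, α₂ ∈ (0,1) ∪ (1,∞) ∪ {∞}, a sequence of probability distributions (P_n), and a distribution P, D_{f_{α₁}}(P_n||P) → 0 if and only if D_{f_{α₂}}(P_n||P) → 0; i.e., all Arimoto divergences are equivalent in convergence. -/

import Mathlib

open Real MeasureTheory Filter ENNReal

/-- The Arimoto divergence of order `α ∈ (0,1) ∪ (1,∞]` between probability densities
`p` and `q`, where the order `α = ∞` gives the total variation distance. -/
noncomputable def ArimotoD {X : Type*} [MeasurableSpace X] (μ : Measure X)
    (α : ℝ≥0∞) (p q : X → ℝ) : ℝ :=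
  if α = ∞ then (1 / 2) * ∫ x, |p x - q x| ∂μ
  else (α.toReal / (α.toReal - 1)) *
    ((∫ x, (p x ^ α.toReal + q x ^ α.toReal) ^ (1 / α.toReal) ∂μ) - 2 ^ (1 / α.toReal))

open Real MeasureTheory Filter ENNReal Set

namespace ArimotoAux

noncomputable def phi (r a b : ℝ) : ℝ := (a ^ r + b ^ r) ^ (1/r) - 2 ^ (1/r - 1) * (a + b)

lemma rpow_rinv (r : ℝ) (hr : r ≠ 0) {x : ℝ} (hx : 0 ≤ x) : (x ^ r) ^ (1/r) = x := by
  rw [one_div, Real.rpow_rpow_inv hx hr]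

lemma phi_homog {r : ℝ} (hr : r ≠ 0) {t a b : ℝ} (ht : 0 ≤ t) (ha : 0 ≤ a) (hb : 0 ≤ b) :
    phi r (t*a) (t*b) = t * phi r a b := by
  unfold phi
  rw [Real.mul_rpow ht ha, Real.mul_rpow ht hb, ← mul_add,
    Real.mul_rpow (by positivity) (by positivity), rpow_rinv r hr ht]
  ring

lemma phi_symm (r a b : ℝ) : phi r a b = phi r b a := by
  unfold phi; rw [add_comm (a ^ r), add_comm a]

lemma two_rpow_eq (r : ℝ) : (2:ℝ) ^ (1/r - 1) * 2 = 2 ^ (1/r) := by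
  nth_rewrite 2 [show (2:ℝ) = (2:ℝ) ^ (1:ℝ) by rw [Real.rpow_one]]
  rw [← Real.rpow_add (by norm_num)]
  norm_num

/-- strict sign, r > 1 -/
lemma phi_pos {r : ℝ} (hr : 1 < r) {a b : ℝ} (ha : 0 ≤ a) (hb : 0 ≤ b) (hab : a ≠ b) :
    0 < phi r a b := by
  have hr0 : (0:ℝ) < r := lt_trans one_pos hr
  have h2 : ((a+b)/2) ^ r < (a ^ r + b ^ r)/2 := by
    have := (strictConvexOn_rpow hr).2 (Set.mem_Ici.2 ha) (Set.mem_Ici.2 hb) hab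
      (by norm_num : (0:ℝ) < 1/2) (by norm_num : (0:ℝ) < 1/2) (by norm_num)
    simp only [smul_eq_mul] at this
    calc ((a+b)/2) ^ r = (1/2*a + 1/2*b) ^ r := by ring_nf
    _ < 1/2 * a ^ r + 1/2 * b ^ r := this
    _ = (a ^ r + b ^ r)/2 := by ring
  have h3 : 2 * ((a+b)/2) ^ r < a ^ r + b ^ r := by linarith
  have h4 : (2 * ((a+b)/2) ^ r) ^ (1/r) < (a ^ r + b ^ r) ^ (1/r) :=
    Real.rpow_lt_rpow (by positivity) h3 (by positivity)
  have h5 : (2 * ((a+b)/2) ^ r) ^ (1/r) = 2 ^ (1/r - 1) * (a + b) := by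
    rw [Real.mul_rpow (by norm_num) (by positivity), rpow_rinv r (ne_of_gt hr0) (by positivity)]
    have : (2:ℝ) ^ (1/r - 1) * 2 = 2 ^ (1/r) := two_rpow_eq r
    nlinarith [this]
  unfold phi; linarith [h4, h5.symm.le]

lemma phi_neg {r : ℝ} (hr0 : 0 < r) (hr : r < 1) {a b : ℝ} (ha : 0 ≤ a) (hb : 0 ≤ b)
    (hab : a ≠ b) : phi r a b < 0 := by
  have h2 : (a ^ r + b ^ r)/2 < ((a+b)/2) ^ r := by
    have := (Real.strictConcaveOn_rpow hr0 hr).2 (Set.mem_Ici.2 ha) (Set.mem_Ici.2 hb) hab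
      (by norm_num : (0:ℝ) < 1/2) (by norm_num : (0:ℝ) < 1/2) (by norm_num)
    simp only [smul_eq_mul] at this
    calc (a ^ r + b ^ r)/2 = 1/2 * a ^ r + 1/2 * b ^ r := by ring
    _ < (1/2*a + 1/2*b) ^ r := this
    _ = ((a+b)/2) ^ r := by ring_nf
  have h3 : a ^ r + b ^ r < 2 * ((a+b)/2) ^ r := by linarith
  have h4 : (a ^ r + b ^ r) ^ (1/r) < (2 * ((a+b)/2) ^ r) ^ (1/r) :=
    Real.rpow_lt_rpow (by positivity) h3 (by positivity)
  have h5 : (2 * ((a+b)/2) ^ r) ^ (1/r) = 2 ^ (1/r - 1) * (a + b) := by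
    rw [Real.mul_rpow (by norm_num) (by positivity), rpow_rinv r (ne_of_gt hr0) (by positivity)]
    have : (2:ℝ) ^ (1/r - 1) * 2 = 2 ^ (1/r) := two_rpow_eq r
    nlinarith [this]
  unfold phi; linarith [h4, h5.symm.le]

lemma phi_nonneg {r : ℝ} (hr : 1 < r) {a b : ℝ} (ha : 0 ≤ a) (hb : 0 ≤ b) :
    0 ≤ phi r a b := by
  rcases eq_or_ne a b with rfl | hab
  · unfold phi
    have : (a ^ r + a ^ r) ^ (1/r) = 2 ^ (1/r) * a := by
      rw [← two_mul, Real.mul_rpow (by norm_num) (by positivity),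
        rpow_rinv r (by positivity) ha]
    rw [this]
    have h2 := two_rpow_eq r
    nlinarith
  · exact (phi_pos hr ha hb hab).le

lemma phi_nonpos {r : ℝ} (hr0 : 0 < r) (hr : r < 1) {a b : ℝ} (ha : 0 ≤ a) (hb : 0 ≤ b) :
    phi r a b ≤ 0 := by
  rcases eq_or_ne a b with rfl | hab
  · unfold phi
    have : (a ^ r + a ^ r) ^ (1/r) = 2 ^ (1/r) * a := by
      rw [← two_mul, Real.mul_rpow (by norm_num) (by positivity),
        rpow_rinv r (by positivity) ha]
    rw [this]
    have h2 := two_rpow_eq r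
    nlinarith
  · exact (phi_neg hr0 hr ha hb hab).le



lemma g_hasDeriv {r b : ℝ} (hr0 : 0 < r) (hb : 0 < b) {x : ℝ} (hx : 0 ≤ x) :
    HasDerivAt (fun y => ((b+y) ^ r + b ^ r) ^ (1/r) - y)
      (((b+x) ^ r + b ^ r) ^ (1/r - 1) * (b+x) ^ (r - 1) - 1) x := by
  have hbx : (0:ℝ) < b + x := by linarith
  have hA : (0:ℝ) < (b+x) ^ r + b ^ r := by positivity
  have h1 : HasDerivAt (fun y : ℝ => b + y) 1 x := (hasDerivAt_id x).const_add b
  have h2 : HasDerivAt (fun y => (b+y) ^ r) (r * (b+x) ^ (r-1) * 1) x :=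
    (Real.hasDerivAt_rpow_const (Or.inl hbx.ne')).comp x h1
  have h3 : HasDerivAt (fun y => (b+y) ^ r + b ^ r) (r * (b+x) ^ (r-1) * 1) x :=
    h2.add_const _
  have h4 : HasDerivAt (fun u : ℝ => u ^ (1/r))
      ((1/r) * ((b+x) ^ r + b ^ r) ^ (1/r - 1)) ((b+x) ^ r + b ^ r) :=
    Real.hasDerivAt_rpow_const (Or.inl hA.ne')
  have h5 := (h4.comp x h3).sub (hasDerivAt_id x)
  refine h5.congr_deriv ?_
  have hr0' : r ≠ 0 := hr0.ne'
  field_simp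

lemma pow_collapse {r b x : ℝ} (hr0 : 0 < r) (hbx : 0 < b + x) :
    ((b+x) ^ r) ^ (1/r - 1) = (b+x) ^ (1 - r) := by
  rw [← Real.rpow_mul hbx.le]
  congr 1
  field_simp

lemma deriv_factor_le {r b x : ℝ} (hr : 1 < r) (hb : 0 < b) (hx : 0 ≤ x) :
    ((b+x) ^ r + b ^ r) ^ (1/r - 1) * (b+x) ^ (r - 1) ≤ 1 := by
  have hr0 : (0:ℝ) < r := lt_trans one_pos hr
  have hbx : (0:ℝ) < b + x := by linarith
  have hle : (b+x) ^ r ≤ (b+x) ^ r + b ^ r := le_add_of_nonneg_right (by positivity)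
  have h1 : ((b+x) ^ r + b ^ r) ^ (1/r - 1) ≤ ((b+x) ^ r) ^ (1/r - 1) :=
    Real.rpow_le_rpow_of_nonpos (by positivity) hle
      (by rw [sub_nonpos, div_le_one hr0]; linarith)
  have h2 := pow_collapse hr0 hbx
  have h3 : (b+x) ^ (1 - r) * (b+x) ^ (r - 1) = 1 := by
    rw [← Real.rpow_add hbx]; norm_num
  have h4 : (0:ℝ) < (b+x) ^ (r-1) := by positivity
  nlinarith [h1, h2, h3, h4]

lemma deriv_factor_ge {r b x : ℝ} (hr0 : 0 < r) (hr : r < 1) (hb : 0 < b) (hx : 0 ≤ x) :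
    1 ≤ ((b+x) ^ r + b ^ r) ^ (1/r - 1) * (b+x) ^ (r - 1) := by
  have hbx : (0:ℝ) < b + x := by linarith
  have hle : (b+x) ^ r ≤ (b+x) ^ r + b ^ r := le_add_of_nonneg_right (by positivity)
  have h1 : ((b+x) ^ r) ^ (1/r - 1) ≤ ((b+x) ^ r + b ^ r) ^ (1/r - 1) :=
    Real.rpow_le_rpow (by positivity) hle
      (by rw [sub_nonneg, le_div_iff₀ hr0]; linarith)
  have h2 := pow_collapse hr0 hbx
  have h3 : (b+x) ^ (1 - r) * (b+x) ^ (r - 1) = 1 := by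
    rw [← Real.rpow_add hbx]; norm_num
  have h4 : (0:ℝ) < (b+x) ^ (r-1) := by positivity
  nlinarith [h1, h2, h3, h4]

/-- Special-pair Minkowski, `r > 1`. -/
lemma mink_gt {r : ℝ} (hr : 1 < r) {a b : ℝ} (hb : 0 ≤ b) (hba : b ≤ a) :
    (a ^ r + b ^ r) ^ (1/r) ≤ 2 ^ (1/r) * b + (a - b) := by
  have hr0 : (0:ℝ) < r := lt_trans one_pos hr
  rcases eq_or_lt_of_le hb with hb0 | hb0
  · rw [← hb0, Real.zero_rpow hr0.ne', add_zero, rpow_rinv r hr0.ne' (hb0 ▸ hba)]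
    simp
  · set g : ℝ → ℝ := fun y => ((b+y) ^ r + b ^ r) ^ (1/r) - y with hg
    have hanti : AntitoneOn g (Ici 0) := by
      apply antitoneOn_of_deriv_nonpos (convex_Ici 0)
      · intro y hy
        exact ((g_hasDeriv hr0 hb0 hy).differentiableAt).continuousAt.continuousWithinAt
      · intro y hy
        rw [interior_Ici] at hy
        exact ((g_hasDeriv hr0 hb0 (le_of_lt hy)).differentiableAt).differentiableWithinAt
      · intro y hy
        rw [interior_Ici] at hy
        rw [(g_hasDeriv hr0 hb0 (le_of_lt hy)).deriv]
        have := deriv_factor_le hr hb0 (le_of_lt hy)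
        linarith
    have key := hanti (Set.mem_Ici.2 (le_refl (0:ℝ))) (Set.mem_Ici.2 (sub_nonneg.2 hba))
      (sub_nonneg.2 hba)
    simp only [hg] at key
    have e0 : ((b+0) ^ r + b ^ r) ^ (1/r) - 0 = 2 ^ (1/r) * b := by
      rw [add_zero, ← two_mul, Real.mul_rpow (by norm_num) (by positivity),
        rpow_rinv r hr0.ne' hb]
      ring
    have e1 : b + (a - b) = a := by ring
    rw [e1] at key
    rw [e0] at key
    linarith
/-- Special-pair reverse Minkowski, `r < 1`. -/
lemma mink_lt {r : ℝ} (hr0 : 0 < r) (hr : r < 1) {a b : ℝ} (hb : 0 ≤ b) (hba : b ≤ a) :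
    2 ^ (1/r) * b + (a - b) ≤ (a ^ r + b ^ r) ^ (1/r) := by
  rcases eq_or_lt_of_le hb with hb0 | hb0
  · rw [← hb0, Real.zero_rpow hr0.ne', add_zero, rpow_rinv r hr0.ne' (hb0 ▸ hba)]
    simp
  · set g : ℝ → ℝ := fun y => ((b+y) ^ r + b ^ r) ^ (1/r) - y with hg
    have hmono : MonotoneOn g (Ici 0) := by
      apply monotoneOn_of_deriv_nonneg (convex_Ici 0)
      · intro y hy
        exact ((g_hasDeriv hr0 hb0 hy).differentiableAt).continuousAt.continuousWithinAt
      · intro y hy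
        rw [interior_Ici] at hy
        exact ((g_hasDeriv hr0 hb0 (le_of_lt hy)).differentiableAt).differentiableWithinAt
      · intro y hy
        rw [interior_Ici] at hy
        rw [(g_hasDeriv hr0 hb0 (le_of_lt hy)).deriv]
        have := deriv_factor_ge hr0 hr hb0 (le_of_lt hy)
        linarith
    have key := hmono (Set.mem_Ici.2 (le_refl (0:ℝ))) (Set.mem_Ici.2 (sub_nonneg.2 hba))
      (sub_nonneg.2 hba)
    simp only [hg] at key
    have e0 : ((b+0) ^ r + b ^ r) ^ (1/r) - 0 = 2 ^ (1/r) * b := by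
      rw [add_zero, ← two_mul, Real.mul_rpow (by norm_num) (by positivity),
        rpow_rinv r hr0.ne' hb]
      ring
    have e1 : b + (a - b) = a := by ring
    rw [e1] at key
    rw [e0] at key
    linarith



lemma phi_abs_le_core {r : ℝ} (hr0 : 0 < r) (hr1 : r ≠ 1) {a b : ℝ} (hb : 0 ≤ b) (hba : b ≤ a) :
    |phi r a b| ≤ (1 + 2 ^ (1/r - 1)) * (a - b) := by
  set c : ℝ := (2:ℝ) ^ (1/r - 1) with hcdef
  have hc : 0 < c := Real.rpow_pos_of_pos (by norm_num) _
  have h2 : c * 2 = 2 ^ (1/r) := two_rpow_eq r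
  have ha : 0 ≤ a := le_trans hb hba
  rcases lt_or_gt_of_ne hr1 with h | h
  · -- r < 1 : phi ≤ 0
    have h1 := mink_lt hr0 h hb hba
    have h0 := phi_nonpos hr0 h ha hb
    rw [abs_of_nonpos h0]
    unfold phi
    nlinarith
  · -- r > 1 : phi ≥ 0
    have h1 := mink_gt h hb hba
    have h0 := phi_nonneg h ha hb
    rw [abs_of_nonneg h0]
    unfold phi
    nlinarith

lemma phi_abs_le {r : ℝ} (hr0 : 0 < r) (hr1 : r ≠ 1) {a b : ℝ} (ha : 0 ≤ a) (hb : 0 ≤ b) :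
    |phi r a b| ≤ (1 + 2 ^ (1/r - 1)) * |a - b| := by
  rcases le_total b a with hba | hab
  · rw [abs_of_nonneg (sub_nonneg.2 hba)]
    exact phi_abs_le_core hr0 hr1 hb hba
  · rw [abs_sub_comm, abs_of_nonneg (sub_nonneg.2 hab), phi_symm]
    exact phi_abs_le_core hr0 hr1 ha hab


lemma continuous_rpow_const {r : ℝ} (hr0 : 0 < r) : Continuous fun x : ℝ => x ^ r := by
  rw [continuous_iff_continuousAt]
  intro x
  exact Real.continuousAt_rpow_const x r (Or.inr hr0.le)

lemma phi_ne_zero {r : ℝ} (hr0 : 0 < r) (hr1 : r ≠ 1) {a b : ℝ} (ha : 0 ≤ a) (hb : 0 ≤ b)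
    (hab : a ≠ b) : phi r a b ≠ 0 := by
  rcases lt_or_gt_of_ne hr1 with h | h
  · exact (phi_neg hr0 h ha hb hab).ne
  · exact (phi_pos h ha hb hab).ne'

lemma phi_lower {r : ℝ} (hr0 : 0 < r) (hr1 : r ≠ 1) {δ : ℝ} (hδ0 : 0 < δ) (hδ1 : δ ≤ 1) :
    ∃ m : ℝ, 0 < m ∧ ∀ a b : ℝ, 0 ≤ a → 0 ≤ b →
      |a - b| ≤ δ * (a + b) + |phi r a b| / m := by
  classical
  set K : Set (ℝ × ℝ) := {q | 0 ≤ q.1 ∧ 0 ≤ q.2 ∧ q.1 + q.2 = 1 ∧ δ ≤ |q.1 - q.2|} with hK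
  have hKclosed : IsClosed K := by
    apply IsClosed.inter
    · exact isClosed_le continuous_const continuous_fst
    apply IsClosed.inter
    · exact isClosed_le continuous_const continuous_snd
    apply IsClosed.inter
    · exact isClosed_eq (continuous_fst.add continuous_snd) continuous_const
    · exact isClosed_le continuous_const (continuous_fst.sub continuous_snd).abs
  have hKsub : K ⊆ Set.Icc ((0:ℝ),(0:ℝ)) (1,1) := by
    rintro ⟨x, y⟩ ⟨hx, hy, hsum, -⟩
    simp only at hx hy hsum
    constructor
    · exact ⟨hx, hy⟩
    · exact ⟨by simp; linarith, by simp; linarith⟩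
  have hKc : IsCompact K := IsCompact.of_isClosed_subset isCompact_Icc hKclosed hKsub
  have hne : K.Nonempty := by
    refine ⟨(1, 0), by norm_num, by norm_num, by norm_num, ?_⟩
    simp only
    rw [sub_zero, abs_one]
    exact hδ1
  have hcont : ContinuousOn (fun q : ℝ × ℝ => |phi r q.1 q.2|) K := by
    intro q hq
    obtain ⟨hq1, hq2, hqsum, -⟩ := hq
    have hpos : 0 < q.1 ^ r + q.2 ^ r := by
      rcases lt_or_ge 0 q.1 with h | h
      · have := Real.rpow_pos_of_pos h r
        have := Real.rpow_nonneg hq2 r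
        linarith
      · have hq1' : q.1 = 0 := le_antisymm h hq1
        have : (0:ℝ) < q.2 := by rw [hq1'] at hqsum; linarith
        have := Real.rpow_pos_of_pos this r
        have := Real.rpow_nonneg hq1 r
        linarith
    have hin : Continuous fun q : ℝ × ℝ => q.1 ^ r + q.2 ^ r :=
      ((continuous_rpow_const hr0).comp continuous_fst).add
        ((continuous_rpow_const hr0).comp continuous_snd)
    have h1 : ContinuousAt (fun q : ℝ × ℝ => (q.1 ^ r + q.2 ^ r) ^ (1/r)) q :=
      hin.continuousAt.rpow_const (Or.inl hpos.ne')
    have h2 : ContinuousAt (fun q : ℝ × ℝ => phi r q.1 q.2) q := by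
      unfold phi
      exact h1.sub (((continuous_fst.add continuous_snd).continuousAt).const_mul _)
    exact h2.abs.continuousWithinAt
  obtain ⟨q0, hq0K, hmin⟩ := hKc.exists_isMinOn hne hcont
  obtain ⟨hq01, hq02, hq0sum, hq0d⟩ := hq0K
  have hq0ne : q0.1 ≠ q0.2 := by
    intro h
    rw [h, sub_self, abs_zero] at hq0d
    linarith
  set m : ℝ := |phi r q0.1 q0.2| with hm
  have hm0 : 0 < m := abs_pos.2 (phi_ne_zero hr0 hr1 hq01 hq02 hq0ne)
  refine ⟨m, hm0, ?_⟩
  intro a b ha hb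
  by_cases hcase : |a - b| ≤ δ * (a + b)
  · have : 0 ≤ |phi r a b| / m := div_nonneg (abs_nonneg _) hm0.le
    linarith
  · push_neg at hcase
    have habs : |a - b| ≤ a + b := by
      rw [abs_sub_le_iff]; constructor <;> linarith
    have ht0 : 0 < a + b := by
      by_contra h
      push_neg at h
      have ha' : a = 0 := by linarith
      have hb' : b = 0 := by linarith
      rw [ha', hb'] at hcase
      simp at hcase
    set t : ℝ := a + b with htdef
    have hqK : ((a/t, b/t) : ℝ × ℝ) ∈ K := by
      refine ⟨div_nonneg ha ht0.le, div_nonneg hb ht0.le, ?_, ?_⟩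
      · simp only
        field_simp
        exact htdef.symm
      · simp only
        rw [div_sub_div_same, abs_div, abs_of_pos ht0, le_div_iff₀ ht0]
        have : δ * (a + b) < |a - b| := hcase
        linarith
    have hmq : m ≤ |phi r (a/t) (b/t)| := by
      have := isMinOn_iff.mp hmin ((a/t, b/t) : ℝ × ℝ) hqK
      simpa using this
    have hhom : phi r a b = t * phi r (a/t) (b/t) := by
      have e1 : a = t * (a/t) := by field_simp
      have e2 : b = t * (b/t) := by field_simp
      calc phi r a b = phi r (t*(a/t)) (t*(b/t)) := by rw [← e1, ← e2]
      _ = t * phi r (a/t) (b/t) :=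
          phi_homog hr0.ne' ht0.le (div_nonneg ha ht0.le) (div_nonneg hb ht0.le)
    have habsh : |phi r a b| = t * |phi r (a/t) (b/t)| := by
      rw [hhom, abs_mul, abs_of_pos ht0]
    have hmt : m * t ≤ |phi r a b| := by
      rw [habsh]
      nlinarith
    have hfin : |a - b| ≤ |phi r a b| / m := by
      rw [le_div_iff₀ hm0]
      nlinarith
    have : 0 ≤ δ * (a + b) := by positivity
    linarith


lemma integrable_of_integral_eq_one {X : Type*} [MeasurableSpace X] {μ : Measure X}
    {f : X → ℝ} (h : ∫ x, f x ∂μ = 1) : Integrable f μ := by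
  by_contra hc
  rw [MeasureTheory.integral_undef hc] at h
  norm_num at h

lemma tendsto_const_mul_iff {g : ℕ → ℝ} {c : ℝ} (hc : c ≠ 0) :
    Tendsto (fun n => c * g n) atTop (nhds 0) ↔ Tendsto g atTop (nhds 0) := by
  constructor
  · intro h
    have h2 := h.const_mul c⁻¹
    rw [mul_zero] at h2
    refine h2.congr fun n => ?_
    field_simp
  · intro h
    have h2 := h.const_mul c
    rw [mul_zero] at h2
    exact h2

lemma finite_iff {X : Type*} [MeasurableSpace X] (μ : Measure X) {r : ℝ}
    (hr0 : 0 < r) (hr1 : r ≠ 1)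
    (P : ℕ → X → ℝ) (p : X → ℝ)
    (hP : ∀ n x, 0 ≤ P n x) (hp : ∀ x, 0 ≤ p x)
    (hPm : ∀ n, Measurable (P n)) (hpm : Measurable p)
    (hP1 : ∀ n, ∫ x, P n x ∂μ = 1) (hp1 : ∫ x, p x ∂μ = 1) :
    Tendsto (fun n => (r / (r - 1)) *
        ((∫ x, (P n x ^ r + p x ^ r) ^ (1/r) ∂μ) - 2 ^ (1/r))) atTop (nhds 0) ↔
      Tendsto (fun n => ∫ x, |P n x - p x| ∂μ) atTop (nhds 0) := by
  have hPint : ∀ n, Integrable (P n) μ := fun n => integrable_of_integral_eq_one (hP1 n)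
  have hpint : Integrable p μ := integrable_of_integral_eq_one hp1
  set C : ℝ := 1 + 2 ^ (1/r - 1) with hC
  have hCpos : 0 < C := by positivity
  set phiE : ℕ → X → ℝ := fun n x => phi r (P n x) (p x) with hphiE
  have hphiEm : ∀ n, Measurable (phiE n) := by
    intro n
    apply Measurable.sub
    · exact (((hPm n).pow measurable_const).add (hpm.pow measurable_const)).pow
        measurable_const
    · exact (((hPm n).add hpm).const_mul _)
  have hfint : ∀ n, Integrable (fun x => P n x - p x) μ := fun n => (hPint n).sub hpint
  have hbound : ∀ n x, |phiE n x| ≤ C * (P n x + p x) := by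
    intro n x
    calc |phiE n x| ≤ C * |P n x - p x| := phi_abs_le hr0 hr1 (hP n x) (hp x)
    _ ≤ C * (P n x + p x) := by
        apply mul_le_mul_of_nonneg_left ?_ hCpos.le
        rw [abs_sub_le_iff]
        constructor <;> nlinarith [hP n x, hp x]
  have hphiint : ∀ n, Integrable (phiE n) μ := by
    intro n
    apply Integrable.mono (((hPint n).add hpint).const_mul C)
      (hphiEm n).aestronglyMeasurable
    filter_upwards with x
    rw [Real.norm_eq_abs, Real.norm_eq_abs]
    calc |phiE n x| ≤ C * (P n x + p x) := hbound n x
    _ ≤ |C * (P n x + p x)| := le_abs_self _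
  -- the integral identity
  have hint_eq : ∀ n, ∫ x, phiE n x ∂μ
      = (∫ x, (P n x ^ r + p x ^ r) ^ (1/r) ∂μ) - 2 ^ (1/r) := by
    intro n
    have hNint : Integrable (fun x => (P n x ^ r + p x ^ r) ^ (1/r)) μ := by
      have : (fun x => (P n x ^ r + p x ^ r) ^ (1/r))
          = fun x => phiE n x + 2 ^ (1/r - 1) * (P n x + p x) := by
        funext x
        simp only [hphiE, phi]
        ring
      rw [this]
      exact (hphiint n).add (((hPint n).add hpint).const_mul _)
    have hX : Integrable (fun x => (2:ℝ) ^ (1/r - 1) * (P n x + p x)) μ :=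
      ((hPint n).add hpint).const_mul _
    have : ∫ x, phiE n x ∂μ
        = (∫ x, (P n x ^ r + p x ^ r) ^ (1/r) ∂μ)
          - ∫ x, 2 ^ (1/r - 1) * (P n x + p x) ∂μ := by
      rw [← MeasureTheory.integral_sub hNint hX]
      rfl
    rw [this, MeasureTheory.integral_const_mul,
      MeasureTheory.integral_add (hPint n) hpint, hP1 n, hp1]
    rw [show (1:ℝ) + 1 = 2 by norm_num, two_rpow_eq r]
  have hGabs : ∀ n, ∫ x, |phiE n x| ∂μ = |∫ x, phiE n x ∂μ| := by
    intro n
    rcases lt_or_gt_of_ne hr1 with h | h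
    · have h1 : ∀ x, |phiE n x| = -(phiE n x) :=
        fun x => abs_of_nonpos (phi_nonpos hr0 h (hP n x) (hp x))
      rw [abs_of_nonpos (MeasureTheory.integral_nonpos
        fun x => phi_nonpos hr0 h (hP n x) (hp x))]
      simp only [h1]
      rw [MeasureTheory.integral_neg]
    · have h1 : ∀ x, |phiE n x| = phiE n x :=
        fun x => abs_of_nonneg (phi_nonneg h (hP n x) (hp x))
      rw [abs_of_nonneg (MeasureTheory.integral_nonneg
        fun x => phi_nonneg h (hP n x) (hp x))]
      simp only [h1]
  set c : ℝ := r / (r - 1) with hc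
  have hcne : c ≠ 0 := by
    apply div_ne_zero hr0.ne'
    intro h
    exact hr1 (by linarith)
  constructor
  · -- Arimoto → L1
    intro hD
    have hD' : Tendsto (fun n => c * (∫ x, phiE n x ∂μ)) atTop (nhds 0) := by
      refine hD.congr fun n => ?_
      rw [hint_eq n]
    have hG : Tendsto (fun n => ∫ x, |phiE n x| ∂μ) atTop (nhds 0) := by
      have h1 := (tendsto_const_mul_iff hcne).1 hD'
      have h2 := h1.abs
      rw [abs_zero] at h2
      refine h2.congr fun n => (hGabs n).symm
    rw [Metric.tendsto_nhds]
    intro ε hε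
    set δ : ℝ := min (ε/4) 1 with hδ
    have hδ0 : 0 < δ := lt_min (by linarith) one_pos
    have hδ1 : δ ≤ 1 := min_le_right _ _
    have hδε : δ ≤ ε/4 := min_le_left _ _
    obtain ⟨m, hm0, hmb⟩ := phi_lower hr0 hr1 hδ0 hδ1
    have hkey : ∀ n, ∫ x, |P n x - p x| ∂μ ≤ 2*δ + (∫ x, |phiE n x| ∂μ)/m := by
      intro n
      have hle : (fun x => |P n x - p x|)
          ≤ fun x => δ * (P n x + p x) + |phiE n x| / m := by
        intro x
        exact hmb (P n x) (p x) (hP n x) (hp x)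
      have hg1 : Integrable (fun x => δ * (P n x + p x)) μ :=
        ((hPint n).add hpint).const_mul δ
      have hg2 : Integrable (fun x => |phiE n x| / m) μ := ((hphiint n).abs).div_const m
      have hg : Integrable (fun x => δ * (P n x + p x) + |phiE n x| / m) μ := hg1.add hg2
      have h2 := MeasureTheory.integral_mono ((hfint n).abs) hg hle
      rw [MeasureTheory.integral_add hg1 hg2, MeasureTheory.integral_const_mul,
        MeasureTheory.integral_add (hPint n) hpint, hP1 n, hp1,
        MeasureTheory.integral_div] at h2
      calc ∫ x, |P n x - p x| ∂μ ≤ δ * (1+1) + (∫ x, |phiE n x| ∂μ)/m := h2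
      _ = 2*δ + (∫ x, |phiE n x| ∂μ)/m := by ring
    have hev : ∀ᶠ n in atTop, (∫ x, |phiE n x| ∂μ) < (ε/4) * m :=
      hG.eventually (gt_mem_nhds (by positivity))
    filter_upwards [hev] with n hn
    rw [Real.dist_eq, sub_zero, abs_of_nonneg (MeasureTheory.integral_nonneg
      fun x => abs_nonneg _)]
    have h3 : (∫ x, |phiE n x| ∂μ)/m < ε/4 := by
      rw [div_lt_iff₀ hm0]
      linarith
    have := hkey n
    linarith
  · -- L1 → Arimoto
    intro hL
    have hDle : ∀ n, |c * ((∫ x, (P n x ^ r + p x ^ r) ^ (1/r) ∂μ) - 2 ^ (1/r))|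
        ≤ |c| * C * (∫ x, |P n x - p x| ∂μ) := by
      intro n
      rw [← hint_eq n, abs_mul]
      have h1 : |∫ x, phiE n x ∂μ| ≤ C * ∫ x, |P n x - p x| ∂μ := by
        rw [← hGabs n]
        have hg : Integrable (fun x => C * |P n x - p x|) μ := ((hfint n).abs).const_mul C
        have h2 := MeasureTheory.integral_mono ((hphiint n).abs) hg
          (fun x => phi_abs_le hr0 hr1 (hP n x) (hp x))
        rw [MeasureTheory.integral_const_mul] at h2
        exact h2
      calc |c| * |∫ x, phiE n x ∂μ| ≤ |c| * (C * ∫ x, |P n x - p x| ∂μ) :=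
        mul_le_mul_of_nonneg_left h1 (abs_nonneg _)
      _ = |c| * C * (∫ x, |P n x - p x| ∂μ) := by ring
    have hUB : Tendsto (fun n => |c| * C * (∫ x, |P n x - p x| ∂μ)) atTop (nhds 0) := by
      have := hL.const_mul (|c| * C)
      rwa [mul_zero] at this
    have hLB : Tendsto (fun n => -(|c| * C * (∫ x, |P n x - p x| ∂μ))) atTop (nhds 0) := by
      have := hUB.neg
      rwa [neg_zero] at this
    refine tendsto_of_tendsto_of_tendsto_of_le_of_le hLB hUB ?_ ?_
    · intro n
      have := hDle n
      have h2 := abs_le.1 this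
      exact h2.1
    · intro n
      exact (abs_le.1 (hDle n)).2

end ArimotoAux

theorem arimoto_equivalence_in_convergence {X : Type*} [MeasurableSpace X] (μ : Measure X)
    (α₁ α₂ : ℝ≥0∞)
    (hα₁ : α₁ ∈ Set.Ioo (0:ℝ≥0∞) 1 ∪ Set.Ioi 1)
    (hα₂ : α₂ ∈ Set.Ioo (0:ℝ≥0∞) 1 ∪ Set.Ioi 1)
    (P : ℕ → X → ℝ) (p : X → ℝ)
    (hP : ∀ n x, 0 ≤ P n x) (hp : ∀ x, 0 ≤ p x)
    (hPm : ∀ n, Measurable (P n)) (hpm : Measurable p)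
    (hP1 : ∀ n, ∫ x, P n x ∂μ = 1) (hp1 : ∫ x, p x ∂μ = 1) :
    Filter.Tendsto (fun n => ArimotoD μ α₁ (P n) p) Filter.atTop (nhds 0) ↔
      Filter.Tendsto (fun n => ArimotoD μ α₂ (P n) p) Filter.atTop (nhds 0) := by
  have key : ∀ α : ℝ≥0∞, α ∈ Set.Ioo (0:ℝ≥0∞) 1 ∪ Set.Ioi 1 →
      (Filter.Tendsto (fun n => ArimotoD μ α (P n) p) Filter.atTop (nhds 0) ↔
        Filter.Tendsto (fun n => ∫ x, |P n x - p x| ∂μ) Filter.atTop (nhds 0)) := by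
    intro α hα
    by_cases htop : α = ∞
    · subst htop
      have he : (fun n => ArimotoD μ ⊤ (P n) p)
          = fun n => (1/2 : ℝ) * ∫ x, |P n x - p x| ∂μ := by
        funext n
        unfold ArimotoD
        rw [if_pos rfl]
      rw [he]
      exact ArimotoAux.tendsto_const_mul_iff (by norm_num)
    · have hne0 : α ≠ 0 := by
        rcases hα with ⟨h0, -⟩ | h1
        · exact h0.ne'
        · exact (lt_trans zero_lt_one h1).ne'
      have hr0 : 0 < α.toReal := ENNReal.toReal_pos hne0 htop
      have hr1 : α.toReal ≠ 1 := by
        rcases hα with ⟨-, h1⟩ | h1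
        · have := (ENNReal.toReal_lt_toReal htop ENNReal.one_ne_top).2 h1
          rw [ENNReal.toReal_one] at this
          exact this.ne
        · have := (ENNReal.toReal_lt_toReal ENNReal.one_ne_top htop).2 h1
          rw [ENNReal.toReal_one] at this
          exact this.ne'
      have he : (fun n => ArimotoD μ α (P n) p)
          = fun n => (α.toReal / (α.toReal - 1)) *
            ((∫ x, (P n x ^ α.toReal + p x ^ α.toReal) ^ (1/α.toReal) ∂μ)
              - 2 ^ (1/α.toReal)) := by
        funext n
        unfold ArimotoD
        rw [if_neg htop]
      rw [he]
      exact ArimotoAux.finite_iff μ hr0 hr1 P p hP hp hPm hpm hP1 hp1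
  exact (key α₁ hα₁).trans (key α₂ hα₂).symm
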